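/- arXiv:2110.06492 — 3 statements merged into one kernel-verified Lean document; each statement's English description precedes it below -/
import Mathlib

section
/- Let V be a type of nodes, s : V → ℝ an injective function with s(v) > 0 for every v, adj : V → V → Prop a symmetric adjacency relation on V, and d_max : ℝ a constant with d_max > 1/s(v) for every v ∈ V. Define d : V → V → ℝ by d(i,j) = 1/s(i) if i = j, d(i,j) = max(1/s(i), 1/s(j)) if i ≠ j and adj(i,j), and d(i,j) = d_max otherwise. Then indistancy implies equality: for all i, j ∈ V, if d(i,i) = d(i,j) and d(j,j) = d(i,j), then i = j. -/
theorem stmt_4 {V : Type*} (s : V → ℝ) (hs : ∀ v, 0 < s v)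
    (hinj : Function.Injective s)
    (adj : V → V → Prop) (hadj : Symmetric adj)
    (dmax : ℝ) (hdmax : ∀ v, 1 / s v < dmax)
    (d : V → V → ℝ)
    (hd_self : ∀ i, d i i = 1 / s i)
    (hd_adj : ∀ i j : V, i ≠ j → adj i j → d i j = max (1 / s i) (1 / s j))
    (hd_far : ∀ i j : V, i ≠ j → ¬ adj i j → d i j = dmax) :
    ∀ i j : V, d i i = d i j → d j j = d i j → i = j := by
  intro i j h1 h2
  by_contra hne
  rw [hd_self] at h1 h2
  by_cases ha : adj i j
  · rw [hd_adj i j hne ha] at h1 h2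
    have : 1 / s i = 1 / s j := h1.trans h2.symm
    exact hne (hinj (by
      have hi := (hs i).ne'
      have hj := (hs j).ne'
      field_simp at this
      exact this.symm))
  · rw [hd_far i j hne ha] at h1
    exact absurd h1 (hdmax i).ne
end

section
/- Let V be a type of nodes, s : V → ℝ a function with s(v) > 0 for every v, adj : V → V → Prop a symmetric adjacency relation, and d_max : ℝ. Define d(i,j) = 1/s(i) if i = j, d(i,j) = max(1/s(i), 1/s(j)) if i ≠ j and adj(i,j), and d(i,j) = d_max otherwise. For ε > 0, let G_Morse(ε) be the simple graph on V in which distinct nodes i, j are joined exactly when adj(i,j) and s(i) ≥ ε and s(j) ≥ ε, and for δ ∈ ℝ let G_Rips(δ) be the simple graph on V in which distinct nodes i, j are joined exactly when d(i,j) ≤ δ. Then for every ε > 0 with 1/ε < d_max, the graphs G_Morse(ε) and G_Rips(1/ε) are equal (they have the same adjacency relation). -/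
theorem stmt_7 {V : Type*} (s : V → ℝ) (hs : ∀ v, 0 < s v)
    (adj : V → V → Prop) (hadj : Symmetric adj)
    (dmax : ℝ)
    (d : V → V → ℝ)
    (hd_self : ∀ i, d i i = 1 / s i)
    (hd_adj : ∀ i j : V, i ≠ j → adj i j → d i j = max (1 / s i) (1 / s j))
    (hd_far : ∀ i j : V, i ≠ j → ¬ adj i j → d i j = dmax)
    (ε : ℝ) (hε : 0 < ε) (hεd : 1 / ε < dmax)
    (GMorse GRips : SimpleGraph V)
    (hGM : ∀ i j : V, GMorse.Adj i j ↔ i ≠ j ∧ adj i j ∧ ε ≤ s i ∧ ε ≤ s j)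
    (hGR : ∀ i j : V, GRips.Adj i j ↔ i ≠ j ∧ d i j ≤ 1 / ε) :
    GMorse = GRips := by
  ext i j
  rw [hGM, hGR]
  constructor
  · rintro ⟨hij, ha, hi, hj⟩
    refine ⟨hij, ?_⟩
    rw [hd_adj i j hij ha, max_le_iff]
    constructor <;> exact one_div_le_one_div_of_le hε (by assumption)
  · rintro ⟨hij, hd⟩
    by_cases ha : adj i j
    · rw [hd_adj i j hij ha, max_le_iff] at hd
      exact ⟨hij, ha, le_of_one_div_le_one_div (hs i) hd.1,
        le_of_one_div_le_one_div (hs j) hd.2⟩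
    · rw [hd_far i j hij ha] at hd
      exact absurd (lt_of_lt_of_le hεd hd) (lt_irrefl _)
end

section
/- Let V be a type of nodes, s : V → ℝ a function with s(v) > 0 for every v, adj : V → V → Prop a symmetric adjacency relation, and d_max : ℝ. Define d(i,j) = 1/s(i) if i = j, d(i,j) = max(1/s(i), 1/s(j)) if i ≠ j and adj(i,j), and d(i,j) = d_max otherwise. For ε > 0, let G_Morse(ε) be the simple graph on V joining distinct nodes i, j exactly when adj(i,j), s(i) ≥ ε, and s(j) ≥ ε, and let G_Rips(δ) be the simple graph on V joining distinct nodes i, j exactly when d(i,j) ≤ δ. Then for every ε > 0 with 1/ε < d_max and every pair of nodes u, v ∈ V, u and v are connected by a path in G_Morse(ε) if and only if u and v are connected by a path in G_Rips(1/ε). In particular, the connected components (clusters) of the Morse filtration at threshold ε coincide with the connected components of the Rips-like filtration at threshold 1/ε. -/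
theorem stmt_8 {V : Type*} (s : V → ℝ) (hs : ∀ v, 0 < s v)
    (adj : V → V → Prop) (hadj : Symmetric adj)
    (dmax : ℝ)
    (d : V → V → ℝ)
    (hd_self : ∀ i, d i i = 1 / s i)
    (hd_adj : ∀ i j : V, i ≠ j → adj i j → d i j = max (1 / s i) (1 / s j))
    (hd_far : ∀ i j : V, i ≠ j → ¬ adj i j → d i j = dmax)
    (ε : ℝ) (hε : 0 < ε) (hεd : 1 / ε < dmax)
    (GMorse GRips : SimpleGraph V)
    (hGM : ∀ i j : V, GMorse.Adj i j ↔ i ≠ j ∧ adj i j ∧ ε ≤ s i ∧ ε ≤ s j)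
    (hGR : ∀ i j : V, GRips.Adj i j ↔ i ≠ j ∧ d i j ≤ 1 / ε) :
    ∀ u v : V, GMorse.Reachable u v ↔ GRips.Reachable u v := by
  have hEq : GMorse = GRips := by
    ext i j
    rw [hGM, hGR]
    constructor
    · rintro ⟨hij, ha, hi, hj⟩
      refine ⟨hij, ?_⟩
      rw [hd_adj i j hij ha]
      exact max_le (one_div_le_one_div_of_le hε hi) (one_div_le_one_div_of_le hε hj)
    · rintro ⟨hij, hle⟩
      by_cases ha : adj i j
      · rw [hd_adj i j hij ha] at hle
        refine ⟨hij, ha, ?_, ?_⟩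
        · have := le_trans (le_max_left _ _) hle
          exact le_of_one_div_le_one_div (hs i) this
        · have := le_trans (le_max_right _ _) hle
          exact le_of_one_div_le_one_div (hs j) this
      · rw [hd_far i j hij ha] at hle
        exact absurd (lt_of_lt_of_le hεd hle) (lt_irrefl _)
  intro u v
  rw [hEq]
end
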